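/- If Y and Z are m × m symmetric matrices over a commutative ring, then haf(Y + Z) = Σ_{T ⊆ [m]} haf(Y_{T,T}) · haf(Z_{T^c,T^c}), where the sum is over all subsets T of [m], T^c is the complement of T, and haf of the empty matrix is 1. -/

import Mathlib

open Finset Polynomial

/-- The hafnian of an `n × n` matrix: `(1/((n/2)! 2^(n/2))) ∑_{σ} ∏_j A_{σ(2j), σ(2j+1)}`,
taken to be `0` when `n` is odd and `1` for the empty matrix. -/
noncomputable def haf {F : Type*} [Field F] {n : ℕ} (A : Matrix (Fin n) (Fin n) F) : F :=
  if h : 2 ∣ n then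
    (((n / 2).factorial * 2 ^ (n / 2) : ℕ) : F)⁻¹ *
      ∑ σ : Equiv.Perm (Fin n), ∏ j : Fin (n / 2),
        A (σ ⟨2 * j.1, by have h1 := Nat.div_mul_cancel h; have h2 := j.isLt; omega⟩)
          (σ ⟨2 * j.1 + 1, by have h1 := Nat.div_mul_cancel h; have h2 := j.isLt; omega⟩)
  else 0

/-- The principal submatrix of `A` indexed by the subset `S` of the rows/columns. -/
def subm {F : Type*} {M : ℕ} (A : Matrix (Fin M) (Fin M) F) (S : Finset (Fin M)) :
    Matrix (Fin S.card) (Fin S.card) F :=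
  fun i j => A (S.orderEmbOfFin rfl i) (S.orderEmbOfFin rfl j)

/-- The GBS polynomial `∑_{S ⊆ V} (-1)^{|S|/2} haf(A_S)² x^{M-|S|}`. -/
noncomputable def GBS {F : Type*} [Field F] {M : ℕ} (A : Matrix (Fin M) (Fin M) F) :
    Polynomial F :=
  ∑ S : Finset (Fin M),
    Polynomial.C ((-1 : F) ^ (S.card / 2) * (haf (subm A S)) ^ 2) * Polynomial.X ^ (M - S.card)

/-- The signless GBS polynomial `∑_{S ⊆ V} haf(A_S)² x^{M-|S|}`. -/
noncomputable def GBSplus {F : Type*} [Field F] {M : ℕ} (A : Matrix (Fin M) (Fin M) F) :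
    Polynomial F :=
  ∑ S : Finset (Fin M), Polynomial.C ((haf (subm A S)) ^ 2) * Polynomial.X ^ (M - S.card)

/-- The signless matching polynomial `μ⁺(A, z) = ∑_{T} haf(A_{T,T}) z^{M-|T|}`. -/
noncomputable def muPlus {F : Type*} [Field F] {M : ℕ} (A : Matrix (Fin M) (Fin M) F) :
    Polynomial F :=
  ∑ S : Finset (Fin M), Polynomial.C (haf (subm A S)) * Polynomial.X ^ (M - S.card)

/-- The (signed) matching polynomial `μ(A, z) = ∑_{T} (-1)^{|T|/2} haf(A_{T,T}) z^{M-|T|}`. -/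
noncomputable def matchPoly {F : Type*} [Field F] {M : ℕ} (A : Matrix (Fin M) (Fin M) F) :
    Polynomial F :=
  ∑ S : Finset (Fin M),
    Polynomial.C ((-1 : F) ^ (S.card / 2) * haf (subm A S)) * Polynomial.X ^ (M - S.card)

/-- The adjacency matrix `[[A, xI],[xI, A]]` of the prism `G □ P₂(x)` over the graph
with adjacency matrix `A`. -/
noncomputable def prism {F : Type*} [Field F] {M : ℕ} (A : Matrix (Fin M) (Fin M) F) (x : F) :
    Matrix (Fin (M + M)) (Fin (M + M)) F :=
  Matrix.submatrix (Matrix.fromBlocks A (x • 1) (x • 1) A) finSumFinEquiv.symm finSumFinEquiv.symm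

/-- The adjacency matrix `A₁ ⊕ A₂` of the disjoint union of two graphs. -/
def dsum {F : Type*} [Zero F] {M N : ℕ} (A : Matrix (Fin M) (Fin M) F)
    (B : Matrix (Fin N) (Fin N) F) : Matrix (Fin (M + N)) (Fin (M + N)) F :=
  Matrix.submatrix (Matrix.fromBlocks A 0 0 B) finSumFinEquiv.symm finSumFinEquiv.symm


private def posA {m : ℕ} (j : Fin (m/2)) : Fin m := ⟨2*j.1, by omega⟩
private def posB {m : ℕ} (j : Fin (m/2)) : Fin m := ⟨2*j.1+1, by omega⟩

private noncomputable def hafSum {n : ℕ} (A : Matrix (Fin n) (Fin n) ℝ) : ℝ :=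
  ∑ σ : Equiv.Perm (Fin n), ∏ j : Fin (n/2), A (σ (posA j)) (σ (posB j))

private def emb1 {m : ℕ} (k : ℕ) (h2k : 2*k ≤ m) (i : Fin (2*k)) : Fin m := ⟨i.1, by omega⟩
private def emb2 {m : ℕ} (k : ℕ) (i : Fin (m - 2*k)) : Fin m := ⟨2*k + i.1, by omega⟩

private lemma emb1_injective {m k : ℕ} (h2k : 2*k ≤ m) :
    Function.Injective (emb1 (m := m) k h2k) := by
  intro i j h
  have h' : i.1 = j.1 := by simpa [emb1, Fin.ext_iff] using h
  exact Fin.ext h'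

private def Tmap {m : ℕ} (k : ℕ) (h2k : 2*k ≤ m) (σ : Equiv.Perm (Fin m)) : Finset (Fin m) :=
  image (fun i => σ (emb1 k h2k i)) univ

private lemma Tmap_card {m k : ℕ} (h2k : 2*k ≤ m) (σ : Equiv.Perm (Fin m)) :
    (Tmap k h2k σ).card = 2*k := by
  have hinj : Function.Injective (fun i => σ (emb1 k h2k i)) :=
    fun a b hab => emb1_injective h2k (σ.injective hab)
  rw [Tmap, Finset.card_image_of_injective _ hinj]
  simp

private lemma card_compl_eq {m k : ℕ} {T : Finset (Fin m)} (hT : T.card = 2*k) :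
    Tᶜ.card = m - 2*k := by
  rw [Finset.card_compl, hT]
  simp

private lemma mem_T_of {m k : ℕ} {h2k : 2*k ≤ m} {T : Finset (Fin m)}
    {σ : Equiv.Perm (Fin m)} (hσ : Tmap k h2k σ = T) (a : Fin (2*k)) :
    σ (emb1 k h2k a) ∈ T := by
  rw [← hσ, Tmap]
  exact Finset.mem_image_of_mem _ (mem_univ _)

private lemma mem_Tc_of {m k : ℕ} {h2k : 2*k ≤ m} {T : Finset (Fin m)}
    {σ : Equiv.Perm (Fin m)} (hσ : Tmap k h2k σ = T) (a : Fin (m - 2*k)) :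
    σ (emb2 k a) ∈ Tᶜ := by
  rw [Finset.mem_compl, ← hσ, Tmap, Finset.mem_image]
  rintro ⟨b, -, hb⟩
  have hv : (emb1 k h2k b).1 = (emb2 k a).1 := congrArg Fin.val (σ.injective hb)
  simp only [emb1, emb2] at hv
  omega

/-- forward map: the permutation of the `T`-indices induced by `σ` on the first `2k` slots. -/
private noncomputable def fwdA {m k : ℕ} (h2k : 2*k ≤ m) {T : Finset (Fin m)}
    (hT : T.card = 2*k) (σ : Equiv.Perm (Fin m)) (hσ : Tmap k h2k σ = T) :
    Equiv.Perm (Fin T.card) :=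
  Equiv.ofBijective
    (fun i => (T.orderIsoOfFin rfl).symm
      ⟨σ (emb1 k h2k ⟨i.1, by omega⟩), mem_T_of hσ _⟩)
    (Finite.injective_iff_bijective.1 (by
      intro i j hij
      have h1 := (T.orderIsoOfFin rfl).symm.injective hij
      have h2 := σ.injective (congrArg Subtype.val h1)
      have h3 : ((⟨i.1, by omega⟩ : Fin (2*k))).1 = ((⟨j.1, by omega⟩ : Fin (2*k))).1 :=
        congrArg Fin.val (emb1_injective h2k h2)
      exact Fin.ext h3))

/-- forward map on the complement side. -/
private noncomputable def fwdB {m k : ℕ} (h2k : 2*k ≤ m) {T : Finset (Fin m)}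
    (hT : T.card = 2*k) (σ : Equiv.Perm (Fin m)) (hσ : Tmap k h2k σ = T) :
    Equiv.Perm (Fin Tᶜ.card) :=
  Equiv.ofBijective
    (fun i => (Tᶜ.orderIsoOfFin rfl).symm
      ⟨σ (emb2 k ⟨i.1, by have := card_compl_eq hT; omega⟩), mem_Tc_of hσ _⟩)
    (Finite.injective_iff_bijective.1 (by
      intro i j hij
      have h1 := (Tᶜ.orderIsoOfFin rfl).symm.injective hij
      have h2 := σ.injective (congrArg Subtype.val h1)
      have h3 : (emb2 (m := m) k ⟨i.1, by have := card_compl_eq hT; omega⟩).1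
          = (emb2 (m := m) k ⟨j.1, by have := card_compl_eq hT; omega⟩).1 :=
        congrArg Fin.val h2
      simp only [emb2] at h3
      exact Fin.ext (by omega)))

/-- backward map: build `σ` from `(T, α, β)`. -/
private noncomputable def bwdPerm {m k : ℕ} (h2k : 2*k ≤ m) {T : Finset (Fin m)}
    (hT : T.card = 2*k) (α : Equiv.Perm (Fin T.card)) (β : Equiv.Perm (Fin Tᶜ.card)) :
    Equiv.Perm (Fin m) :=
  Equiv.ofBijective
    (fun i => if h : i.1 < 2*k
      then ((T.orderIsoOfFin rfl) (α ⟨i.1, by omega⟩) : Fin m)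
      else ((Tᶜ.orderIsoOfFin rfl) (β ⟨i.1 - 2*k, by
        have := card_compl_eq hT; omega⟩) : Fin m))
    (Finite.injective_iff_bijective.1 (by
      intro i j hij
      dsimp only at hij
      split_ifs at hij with h1 h2 h2
      · have h4 := α.injective ((T.orderIsoOfFin rfl).injective (Subtype.coe_injective hij))
        have h5 : i.1 = j.1 := by simpa [Fin.ext_iff] using h4
        exact Fin.ext h5
      · have hmem : ((T.orderIsoOfFin rfl) (α ⟨i.1, by omega⟩) : Fin m) ∈ T :=
          ((T.orderIsoOfFin rfl) _).2
        rw [hij] at hmem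
        exact absurd hmem (Finset.mem_compl.1 ((Tᶜ.orderIsoOfFin rfl) _).2)
      · have hmem : ((T.orderIsoOfFin rfl) (α ⟨j.1, by omega⟩) : Fin m) ∈ T :=
          ((T.orderIsoOfFin rfl) _).2
        rw [← hij] at hmem
        exact absurd hmem (Finset.mem_compl.1 ((Tᶜ.orderIsoOfFin rfl) _).2)
      · have h4 := β.injective ((Tᶜ.orderIsoOfFin rfl).injective (Subtype.coe_injective hij))
        have h5 : i.1 - 2*k = j.1 - 2*k := congrArg Fin.val h4
        exact Fin.ext (by omega)))

private lemma bwdPerm_apply {m k : ℕ} (h2k : 2*k ≤ m) {T : Finset (Fin m)}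
    (hT : T.card = 2*k) (α : Equiv.Perm (Fin T.card)) (β : Equiv.Perm (Fin Tᶜ.card))
    (i : Fin m) :
    bwdPerm h2k hT α β i = if h : i.1 < 2*k
      then ((T.orderIsoOfFin rfl) (α ⟨i.1, by omega⟩) : Fin m)
      else ((Tᶜ.orderIsoOfFin rfl) (β ⟨i.1 - 2*k, by
        have := card_compl_eq hT; omega⟩) : Fin m) := rfl

private lemma fwdA_apply {m k : ℕ} (h2k : 2*k ≤ m) {T : Finset (Fin m)}
    (hT : T.card = 2*k) (σ : Equiv.Perm (Fin m)) (hσ : Tmap k h2k σ = T) (i : Fin T.card) :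
    fwdA h2k hT σ hσ i = (T.orderIsoOfFin rfl).symm
      ⟨σ (emb1 k h2k ⟨i.1, by omega⟩), mem_T_of hσ _⟩ := rfl

private lemma fwdB_apply {m k : ℕ} (h2k : 2*k ≤ m) {T : Finset (Fin m)}
    (hT : T.card = 2*k) (σ : Equiv.Perm (Fin m)) (hσ : Tmap k h2k σ = T) (i : Fin Tᶜ.card) :
    fwdB h2k hT σ hσ i = (Tᶜ.orderIsoOfFin rfl).symm
      ⟨σ (emb2 k ⟨i.1, by have := card_compl_eq hT; omega⟩), mem_Tc_of hσ _⟩ := rfl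

private lemma Tmap_bwd {m k : ℕ} (h2k : 2*k ≤ m) {T : Finset (Fin m)}
    (hT : T.card = 2*k) (α : Equiv.Perm (Fin T.card)) (β : Equiv.Perm (Fin Tᶜ.card)) :
    Tmap k h2k (bwdPerm h2k hT α β) = T := by
  apply Finset.eq_of_subset_of_card_le
  · intro x hx
    rw [Tmap, Finset.mem_image] at hx
    obtain ⟨a, -, rfl⟩ := hx
    rw [bwdPerm_apply, dif_pos (show (emb1 k h2k a).1 < 2*k from a.isLt)]
    exact ((T.orderIsoOfFin rfl) _).2
  · rw [Tmap_card h2k]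
    exact hT.le

private lemma bwd_fwd {m k : ℕ} (h2k : 2*k ≤ m) {T : Finset (Fin m)}
    (hT : T.card = 2*k) (σ : Equiv.Perm (Fin m)) (hσ : Tmap k h2k σ = T) :
    bwdPerm h2k hT (fwdA h2k hT σ hσ) (fwdB h2k hT σ hσ) = σ := by
  refine Equiv.ext fun i => ?_
  rw [bwdPerm_apply]
  by_cases h : i.1 < 2*k
  · rw [dif_pos h, fwdA_apply]
    rw [OrderIso.apply_symm_apply]
    exact congrArg σ (Fin.ext rfl)
  · rw [dif_neg h, fwdB_apply]
    rw [OrderIso.apply_symm_apply]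
    refine congrArg σ (Fin.ext ?_)
    show 2*k + (i.1 - 2*k) = i.1
    omega

private lemma fwdA_bwd {m k : ℕ} (h2k : 2*k ≤ m) {T : Finset (Fin m)}
    (hT : T.card = 2*k) (α : Equiv.Perm (Fin T.card)) (β : Equiv.Perm (Fin Tᶜ.card))
    (hσ : Tmap k h2k (bwdPerm h2k hT α β) = T) :
    fwdA h2k hT (bwdPerm h2k hT α β) hσ = α := by
  refine Equiv.ext fun i => ?_
  rw [fwdA_apply]
  have h1 : bwdPerm h2k hT α β (emb1 k h2k ⟨i.1, by omega⟩)
      = ((T.orderIsoOfFin rfl) (α ⟨(emb1 (m := m) k h2k ⟨i.1, by omega⟩).1, by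
          simp only [emb1]; omega⟩) : Fin m) := by
    rw [bwdPerm_apply, dif_pos]
    simp only [emb1]
    omega
  have h2 : (⟨(emb1 (m := m) k h2k ⟨i.1, by omega⟩).1, by simp only [emb1]; omega⟩ :
      Fin T.card) = i := Fin.ext rfl
  rw [(T.orderIsoOfFin rfl).symm_apply_eq]
  refine Subtype.ext ?_
  show bwdPerm h2k hT α β (emb1 k h2k ⟨i.1, by omega⟩) = _
  rw [h1]
  exact congrArg (fun x => (((T.orderIsoOfFin rfl) (α x) : Fin m))) h2

private lemma fwdB_bwd {m k : ℕ} (h2k : 2*k ≤ m) {T : Finset (Fin m)}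
    (hT : T.card = 2*k) (α : Equiv.Perm (Fin T.card)) (β : Equiv.Perm (Fin Tᶜ.card))
    (hσ : Tmap k h2k (bwdPerm h2k hT α β) = T) :
    fwdB h2k hT (bwdPerm h2k hT α β) hσ = β := by
  refine Equiv.ext fun i => ?_
  rw [fwdB_apply]
  have hle : ¬ (emb2 (m := m) k ⟨i.1, by have := card_compl_eq hT; omega⟩).1 < 2*k := by
    simp only [emb2]; omega
  have h1 : bwdPerm h2k hT α β (emb2 k ⟨i.1, by have := card_compl_eq hT; omega⟩)
      = ((Tᶜ.orderIsoOfFin rfl) (β ⟨(emb2 (m := m) k ⟨i.1, by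
          have := card_compl_eq hT; omega⟩).1 - 2*k, by
          have := card_compl_eq hT; simp only [emb2]; omega⟩) : Fin m) := by
    rw [bwdPerm_apply, dif_neg hle]
  have h2 : (⟨(emb2 (m := m) k ⟨i.1, by have := card_compl_eq hT; omega⟩).1 - 2*k, by
      have := card_compl_eq hT; simp only [emb2]; omega⟩ : Fin Tᶜ.card) = i := by
    refine Fin.ext ?_
    show 2*k + i.1 - 2*k = i.1
    omega
  rw [(Tᶜ.orderIsoOfFin rfl).symm_apply_eq]
  refine Subtype.ext ?_
  show bwdPerm h2k hT α β (emb2 k ⟨i.1, by have := card_compl_eq hT; omega⟩) = _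
  rw [h1]
  exact congrArg (fun x => (((Tᶜ.orderIsoOfFin rfl) (β x) : Fin m))) h2

private lemma ptY {m k : ℕ} (h2k : 2*k ≤ m) {T : Finset (Fin m)}
    (hT : T.card = 2*k) (σ : Equiv.Perm (Fin m)) (hσ : Tmap k h2k σ = T) (x : Fin T.card) :
    (T.orderEmbOfFin rfl) ((fwdA h2k hT σ hσ) x) = σ ⟨x.1, by omega⟩ := by
  rw [fwdA_apply, ← Finset.coe_orderIsoOfFin_apply, OrderIso.apply_symm_apply]
  rfl

private lemma ptZ {m k : ℕ} (h2k : 2*k ≤ m) {T : Finset (Fin m)}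
    (hT : T.card = 2*k) (σ : Equiv.Perm (Fin m)) (hσ : Tmap k h2k σ = T) (x : Fin Tᶜ.card) :
    (Tᶜ.orderEmbOfFin rfl) ((fwdB h2k hT σ hσ) x) = σ ⟨2*k + x.1, by
      have := card_compl_eq hT; omega⟩ := by
  rw [fwdB_apply, ← Finset.coe_orderIsoOfFin_apply, OrderIso.apply_symm_apply]
  rfl

private lemma prodY_eq {m k : ℕ} (h2k : 2*k ≤ m) {T : Finset (Fin m)}
    (hT : T.card = 2*k) (σ : Equiv.Perm (Fin m)) (hσ : Tmap k h2k σ = T)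
    (Y : Matrix (Fin m) (Fin m) ℝ) :
    (∏ j : Fin (T.card/2), (subm Y T) ((fwdA h2k hT σ hσ) (posA j))
        ((fwdA h2k hT σ hσ) (posB j)))
    = ∏ j ∈ univ.filter (fun j : Fin (m/2) => j.1 < k), Y (σ (posA j)) (σ (posB j)) := by
  refine Finset.prod_bij' (i := fun j _ => (⟨j.1, by omega⟩ : Fin (m/2)))
    (j := fun j hj => (⟨j.1, by
      have := (Finset.mem_filter.1 hj).2; omega⟩ : Fin (T.card/2)))
    (fun j _ => Finset.mem_filter.2 ⟨mem_univ _, by show j.1 < k; have := j.isLt; omega⟩)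
    (fun j hj => mem_univ _) (fun j _ => Fin.ext rfl) (fun j hj => Fin.ext rfl)
    (fun j _ => ?_)
  show Y (T.orderEmbOfFin rfl _) (T.orderEmbOfFin rfl _) = _
  rw [ptY, ptY]
  exact congrArg₂ Y (congrArg σ (Fin.ext rfl)) (congrArg σ (Fin.ext rfl))

private lemma prodZ_eq {m k : ℕ} (h2k : 2*k ≤ m) {T : Finset (Fin m)}
    (hT : T.card = 2*k) (σ : Equiv.Perm (Fin m)) (hσ : Tmap k h2k σ = T)
    (Z : Matrix (Fin m) (Fin m) ℝ) :
    (∏ j : Fin (Tᶜ.card/2), (subm Z Tᶜ) ((fwdB h2k hT σ hσ) (posA j))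
        ((fwdB h2k hT σ hσ) (posB j)))
    = ∏ j ∈ (univ.filter (fun j : Fin (m/2) => j.1 < k))ᶜ, Z (σ (posA j)) (σ (posB j)) := by
  have hTc := card_compl_eq hT
  refine Finset.prod_bij' (i := fun j _ => (⟨k + j.1, by omega⟩ : Fin (m/2)))
    (j := fun j hj => (⟨j.1 - k, by
      have := Finset.mem_compl.1 hj
      simp only [Finset.mem_filter, Finset.mem_univ, true_and, not_lt] at this
      omega⟩ : Fin (Tᶜ.card/2)))
    (fun j _ => by
      simp only [Finset.mem_compl, Finset.mem_filter, Finset.mem_univ, true_and]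
      show ¬ (k + j.1 < k)
      omega)
    (fun j hj => mem_univ _)
    (fun j _ => Fin.ext (by show k + j.1 - k = j.1; omega))
    (fun j hj => Fin.ext (by
      have := Finset.mem_compl.1 hj
      simp only [Finset.mem_filter, Finset.mem_univ, true_and, not_lt] at this
      show k + (j.1 - k) = j.1; omega))
    (fun j _ => ?_)
  show Z (Tᶜ.orderEmbOfFin rfl _) (Tᶜ.orderEmbOfFin rfl _) = _
  rw [ptZ, ptZ]
  refine congrArg₂ Z (congrArg σ (Fin.ext ?_)) (congrArg σ (Fin.ext ?_))
  · show 2*k + 2*j.1 = 2*(k + j.1); ring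
  · show 2*k + (2*j.1 + 1) = 2*(k + j.1) + 1; ring

private lemma sum_perm_split {m : ℕ} (Y Z : Matrix (Fin m) (Fin m) ℝ) {k : ℕ} (h2k : 2*k ≤ m) :
    ∑ σ : Equiv.Perm (Fin m),
        (∏ j ∈ univ.filter (fun j : Fin (m/2) => j.1 < k), Y (σ (posA j)) (σ (posB j))) *
        ∏ j ∈ (univ.filter (fun j : Fin (m/2) => j.1 < k))ᶜ, Z (σ (posA j)) (σ (posB j))
    = ∑ T ∈ powersetCard (2*k) (univ : Finset (Fin m)),
        hafSum (subm Y T) * hafSum (subm Z Tᶜ) := by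
  rw [← Finset.sum_fiberwise_of_maps_to (g := Tmap k h2k)
    (fun σ _ => Finset.mem_powersetCard.2 ⟨Finset.subset_univ _, Tmap_card h2k σ⟩)]
  refine Finset.sum_congr rfl fun T hT' => ?_
  have hT : T.card = 2*k := (Finset.mem_powersetCard.1 hT').2
  rw [hafSum, hafSum, Finset.sum_mul_sum, ← Finset.sum_product']
  refine Finset.sum_bij'
    (i := fun σ hσ => (fwdA h2k hT σ (Finset.mem_filter.1 hσ).2,
      fwdB h2k hT σ (Finset.mem_filter.1 hσ).2))
    (j := fun p _ => bwdPerm h2k hT p.1 p.2)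
    (fun σ hσ => Finset.mem_product.2 ⟨Finset.mem_univ _, Finset.mem_univ _⟩)
    (fun p hp => Finset.mem_filter.2 ⟨Finset.mem_univ _, Tmap_bwd h2k hT p.1 p.2⟩)
    (fun σ hσ => bwd_fwd h2k hT σ (Finset.mem_filter.1 hσ).2)
    (fun p hp => Prod.ext (fwdA_bwd h2k hT p.1 p.2 (Tmap_bwd h2k hT p.1 p.2))
      (fwdB_bwd h2k hT p.1 p.2 (Tmap_bwd h2k hT p.1 p.2)))
    (fun σ hσ => ?_)
  rw [← prodY_eq h2k hT σ (Finset.mem_filter.1 hσ).2 Y,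
    ← prodZ_eq h2k hT σ (Finset.mem_filter.1 hσ).2 Z]

private noncomputable def pairPerm {m : ℕ} (hm : 2 ∣ m) (e : Equiv.Perm (Fin (m/2))) :
    Equiv.Perm (Fin m) :=
  Equiv.ofBijective
    (fun i => ⟨2 * (e ⟨i.1/2, by omega⟩).1 + i.1 % 2,
      by have := (e ⟨i.1/2, by omega⟩).isLt; omega⟩)
    (Finite.injective_iff_bijective.1 (by
      intro i j hij
      have hv := congrArg Fin.val hij
      simp only at hv
      have h1 : (e ⟨i.1/2, by omega⟩).1 = (e ⟨j.1/2, by omega⟩).1 := by omega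
      have h2 : (⟨i.1/2, by omega⟩ : Fin (m/2)) = ⟨j.1/2, by omega⟩ :=
        e.injective (Fin.ext h1)
      have h3 : i.1/2 = j.1/2 := congrArg Fin.val h2
      have h4 : i.1 % 2 = j.1 % 2 := by omega
      exact Fin.ext (by omega)))

private lemma pairPerm_posA {m : ℕ} (hm : 2 ∣ m) (e : Equiv.Perm (Fin (m/2)))
    (j : Fin (m/2)) : pairPerm hm e (posA j) = posA (e j) := by
  have h : (⟨(posA (m := m) j).1/2, by omega⟩ : Fin (m/2)) = j := Fin.ext (by
    show 2*j.1/2 = j.1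
    omega)
  refine Fin.ext ?_
  show 2 * (e ⟨(posA (m := m) j).1/2, by omega⟩).1 + (posA (m := m) j).1 % 2 = 2*(e j).1
  rw [h]
  show 2 * (e j).1 + (2*j.1) % 2 = 2*(e j).1
  omega

private lemma pairPerm_posB {m : ℕ} (hm : 2 ∣ m) (e : Equiv.Perm (Fin (m/2)))
    (j : Fin (m/2)) : pairPerm hm e (posB j) = posB (e j) := by
  have h : (⟨(posB (m := m) j).1/2, by omega⟩ : Fin (m/2)) = j := Fin.ext (by
    show (2*j.1+1)/2 = j.1
    omega)
  refine Fin.ext ?_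
  show 2 * (e ⟨(posB (m := m) j).1/2, by omega⟩).1 + (posB (m := m) j).1 % 2 = 2*(e j).1+1
  rw [h]
  show 2 * (e j).1 + (2*j.1+1) % 2 = 2*(e j).1+1
  omega

private lemma exists_perm_image {α : Type*} [Fintype α] [DecidableEq α] {A B : Finset α}
    (h : A.card = B.card) : ∃ e : Equiv.Perm α, A.image e = B := by
  have hA : Fintype.card {x // x ∈ A} = Fintype.card {x // x ∈ B} := by
    simpa [Fintype.card_coe] using h
  have hA' : Fintype.card {x // ¬ x ∈ A} = Fintype.card {x // ¬ x ∈ B} := by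
    rw [Fintype.card_subtype_compl, Fintype.card_subtype_compl, hA]
  let e0 := Fintype.equivOfCardEq hA
  let e1 := Fintype.equivOfCardEq hA'
  set e : Equiv.Perm α := (Equiv.sumCompl (· ∈ A)).symm.trans ((e0.sumCongr e1).trans
    (Equiv.sumCompl (· ∈ B))) with he
  refine ⟨e, ?_⟩
  have hsub : A.image e ⊆ B := by
    intro x hx
    simp only [Finset.mem_image] at hx
    obtain ⟨a, ha, rfl⟩ := hx
    simp [he, Equiv.sumCompl_symm_apply_of_pos ha, Subtype.coe_prop]
  refine Finset.eq_of_subset_of_card_le hsub ?_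
  rw [Finset.card_image_of_injective _ e.injective, h]

private lemma image_compl_perm {α : Type*} [Fintype α] [DecidableEq α] (e : Equiv.Perm α)
    (S : Finset α) : Sᶜ.image e = (S.image e)ᶜ := by
  have key : ∀ (A : Finset α) (x : α), x ∈ A.image e ↔ e.symm x ∈ A := by
    intro A x
    simp only [Finset.mem_image]
    constructor
    · rintro ⟨a, ha, rfl⟩; simpa using ha
    · intro h; exact ⟨e.symm x, h, by simp⟩
  ext x
  simp [key, Finset.mem_compl]

private lemma card_filter_lt (p k : ℕ) (hk : k ≤ p) :
    (univ.filter (fun j : Fin p => j.1 < k)).card = k := by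
  have : univ.filter (fun j : Fin p => j.1 < k) =
      (univ : Finset (Fin k)).map (Fin.castLEEmb hk) := by
    ext j
    simp only [Finset.mem_filter, Finset.mem_map, Finset.mem_univ, true_and]
    constructor
    · intro h; exact ⟨⟨j.1, h⟩, by simp [Fin.castLEEmb, Fin.ext_iff]⟩
    · rintro ⟨i, hi⟩; rw [← hi]; exact i.isLt
  rw [this, Finset.card_map, Finset.card_univ, Fintype.card_fin]

/-- reindexing: sum over σ of products over `S.image e`/`(S.image e)ᶜ` equals the
sums with `S`/`Sᶜ`. -/
private lemma sum_perm_reindex {m : ℕ} (hm : 2 ∣ m) (Y Z : Matrix (Fin m) (Fin m) ℝ)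
    (e : Equiv.Perm (Fin (m/2))) (S : Finset (Fin (m/2))) :
    ∑ σ : Equiv.Perm (Fin m), (∏ j ∈ S.image e, Y (σ (posA j)) (σ (posB j))) *
        ∏ j ∈ Sᶜ.image e, Z (σ (posA j)) (σ (posB j))
    = ∑ σ : Equiv.Perm (Fin m), (∏ j ∈ S, Y (σ (posA j)) (σ (posB j))) *
        ∏ j ∈ Sᶜ, Z (σ (posA j)) (σ (posB j)) := by
  refine (Fintype.sum_bijective (· * pairPerm hm e⁻¹) (Group.mulRight_bijective _) _ _
    (fun σ => ?_)).symm
  rw [Finset.prod_image (fun x _ y _ h => e.injective h),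
    Finset.prod_image (fun x _ y _ h => e.injective h)]
  congr 1 <;> refine Finset.prod_congr rfl (fun j _ => ?_) <;>
    rw [Equiv.Perm.mul_apply, pairPerm_posA, Equiv.Perm.mul_apply, pairPerm_posB,
      Equiv.Perm.inv_def, Equiv.symm_apply_apply]

/-- replace arbitrary `S` by the canonical first-`k` set. -/
private lemma sum_perm_canon {m : ℕ} (hm : 2 ∣ m) (Y Z : Matrix (Fin m) (Fin m) ℝ)
    (S : Finset (Fin (m/2))) :
    ∑ σ : Equiv.Perm (Fin m), (∏ j ∈ S, Y (σ (posA j)) (σ (posB j))) *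
        ∏ j ∈ Sᶜ, Z (σ (posA j)) (σ (posB j))
    = ∑ σ : Equiv.Perm (Fin m),
        (∏ j ∈ univ.filter (fun j : Fin (m/2) => j.1 < S.card), Y (σ (posA j)) (σ (posB j))) *
        ∏ j ∈ (univ.filter (fun j : Fin (m/2) => j.1 < S.card))ᶜ, Z (σ (posA j)) (σ (posB j)) := by
  have hk : S.card ≤ m/2 := by
    simpa using Finset.card_le_card (Finset.subset_univ S)
  obtain ⟨e, he⟩ := exists_perm_image (A := univ.filter (fun j : Fin (m/2) => j.1 < S.card))
    (B := S) (by rw [card_filter_lt _ _ hk])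
  conv_lhs => rw [← he]
  rw [← image_compl_perm]
  exact sum_perm_reindex hm Y Z e _


private lemma haf_eq_hafSum {n : ℕ} (h : 2 ∣ n) (A : Matrix (Fin n) (Fin n) ℝ) :
    haf A = (((n / 2).factorial * 2 ^ (n / 2) : ℕ) : ℝ)⁻¹ * hafSum A := by
  rw [haf, dif_pos h]
  rfl

private lemma haf_odd {n : ℕ} (h : ¬ 2 ∣ n) (A : Matrix (Fin n) (Fin n) ℝ) :
    haf A = 0 := by
  rw [haf, dif_neg h]

private lemma coeff_eq {p k : ℕ} (hk : k ≤ p) :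
    ((p.factorial * 2^p : ℕ) : ℝ)⁻¹ * ((p.choose k : ℕ) : ℝ) =
    ((k.factorial * 2^k : ℕ) : ℝ)⁻¹ * (((p-k).factorial * 2^(p-k) : ℕ) : ℝ)⁻¹ := by
  have key : (p.choose k) * (k.factorial * 2^k) * ((p-k).factorial * 2^(p-k))
      = p.factorial * 2^p := by
    have h1 := Nat.choose_mul_factorial_mul_factorial hk
    have h2 : (2:ℕ)^k * 2^(p-k) = 2^p := by rw [← pow_add]; congr 1; omega
    calc (p.choose k) * (k.factorial * 2^k) * ((p-k).factorial * 2^(p-k))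
        = (p.choose k * k.factorial * (p-k).factorial) * (2^k * 2^(p-k)) := by ring
      _ = p.factorial * 2^p := by rw [h1, h2]
  have hcast : ((p.factorial * 2^p : ℕ) : ℝ)
      = ((p.choose k : ℕ) : ℝ) * ((k.factorial * 2^k : ℕ) : ℝ)
        * (((p-k).factorial * 2^(p-k) : ℕ) : ℝ) := by
    rw [← Nat.cast_mul, ← Nat.cast_mul, ← key]
  have h1 : ((k.factorial * 2^k : ℕ) : ℝ) ≠ 0 := Nat.cast_ne_zero.2 (by positivity)
  have h2 : (((p-k).factorial * 2^(p-k) : ℕ) : ℝ) ≠ 0 := Nat.cast_ne_zero.2 (by positivity)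
  have h3 : ((p.choose k : ℕ) : ℝ) ≠ 0 := Nat.cast_ne_zero.2 (Nat.choose_pos hk).ne'
  rw [hcast]
  field_simp

private lemma lhs_eq {m : ℕ} (hm : 2 ∣ m) (Y Z : Matrix (Fin m) (Fin m) ℝ) :
    haf (Y + Z) = ∑ k ∈ Finset.range (m/2+1),
      (((m/2).factorial * 2^(m/2) : ℕ) : ℝ)⁻¹ * (((m/2).choose k : ℕ) : ℝ) *
        ∑ T ∈ powersetCard (2*k) (univ : Finset (Fin m)),
          hafSum (subm Y T) * hafSum (subm Z Tᶜ) := by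
  rw [haf_eq_hafSum hm]
  have expand : hafSum (Y + Z) = ∑ σ : Equiv.Perm (Fin m),
      ∑ S ∈ (univ : Finset (Fin (m/2))).powerset,
        (∏ j ∈ S, Y (σ (posA j)) (σ (posB j))) *
          ∏ j ∈ univ \ S, Z (σ (posA j)) (σ (posB j)) := by
    rw [hafSum]
    refine Fintype.sum_congr _ _ fun σ => ?_
    simp only [Matrix.add_apply]
    exact Finset.prod_add _ _ _
  rw [expand, Finset.sum_comm]
  have step : ∀ S ∈ (univ : Finset (Fin (m/2))).powerset,
      (∑ σ : Equiv.Perm (Fin m), (∏ j ∈ S, Y (σ (posA j)) (σ (posB j))) *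
        ∏ j ∈ univ \ S, Z (σ (posA j)) (σ (posB j)))
      = ∑ T ∈ powersetCard (2*S.card) (univ : Finset (Fin m)),
          hafSum (subm Y T) * hafSum (subm Z Tᶜ) := by
    intro S _
    have hS : S.card ≤ m/2 := by
      simpa using Finset.card_le_card (Finset.subset_univ S)
    have h2k : 2*S.card ≤ m := by omega
    rw [← Finset.compl_eq_univ_sdiff, sum_perm_canon hm Y Z S, sum_perm_split Y Z h2k]
  rw [Finset.sum_congr rfl step, Finset.sum_powerset]
  rw [Finset.mul_sum]
  refine Finset.sum_congr (by simp) fun k hk => ?_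
  have inner : ∀ S ∈ powersetCard k (univ : Finset (Fin (m/2))),
      (∑ T ∈ powersetCard (2*S.card) (univ : Finset (Fin m)),
          hafSum (subm Y T) * hafSum (subm Z Tᶜ))
      = ∑ T ∈ powersetCard (2*k) (univ : Finset (Fin m)),
          hafSum (subm Y T) * hafSum (subm Z Tᶜ) := by
    intro S hS
    rw [(Finset.mem_powersetCard.1 hS).2]
  rw [Finset.sum_congr rfl inner, Finset.sum_const, Finset.card_powersetCard]
  simp only [Finset.card_univ, Fintype.card_fin, nsmul_eq_mul]
  ring

private lemma rhs_eq {m : ℕ} (hm : 2 ∣ m) (Y Z : Matrix (Fin m) (Fin m) ℝ) :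
    ∑ T : Finset (Fin m), haf (subm Y T) * haf (subm Z Tᶜ)
      = ∑ k ∈ Finset.range (m/2+1),
        ((k.factorial * 2^k : ℕ) : ℝ)⁻¹ * (((m/2-k).factorial * 2^(m/2-k) : ℕ) : ℝ)⁻¹ *
          ∑ T ∈ powersetCard (2*k) (univ : Finset (Fin m)),
            hafSum (subm Y T) * hafSum (subm Z Tᶜ) := by
  rw [← Finset.powerset_univ, Finset.sum_powerset]
  have himg : (Finset.range (m/2+1)).image (fun k => 2*k) ⊆ Finset.range ((univ : Finset (Fin m)).card + 1) := by
    intro c hc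
    simp only [Finset.mem_image, Finset.mem_range] at hc
    obtain ⟨k, hk, rfl⟩ := hc
    simp only [Finset.mem_range, Finset.card_univ, Fintype.card_fin]
    omega
  rw [← Finset.sum_subset himg (by
    intro c hc hc2
    have hcodd : ¬ 2 ∣ c := by
      intro ⟨d, hd⟩
      refine hc2 ?_
      simp only [Finset.mem_range, Finset.card_univ, Fintype.card_fin] at hc
      exact Finset.mem_image.2 ⟨d, Finset.mem_range.2 (by omega), by omega⟩
    refine Finset.sum_eq_zero fun T hT => ?_
    have hTc : T.card = c := (Finset.mem_powersetCard.1 hT).2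
    rw [haf_odd (by rw [hTc]; exact hcodd), zero_mul])]
  rw [Finset.sum_image (fun a _ b _ h => by omega)]
  refine Finset.sum_congr rfl fun k hk => ?_
  have hk' : k ≤ m/2 := by simpa [Nat.lt_succ_iff] using hk
  rw [Finset.mul_sum]
  refine Finset.sum_congr rfl fun T hT => ?_
  have hTcard : T.card = 2*k := (Finset.mem_powersetCard.1 hT).2
  have hTccard : Tᶜ.card = m - 2*k := card_compl_eq hTcard
  rw [haf_eq_hafSum (by omega : 2 ∣ T.card), haf_eq_hafSum (by omega : 2 ∣ Tᶜ.card)]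
  have e1 : T.card / 2 = k := by omega
  have e2 : Tᶜ.card / 2 = m/2 - k := by omega
  rw [e1, e2]
  ring

/-- `haf(Y+Z) = ∑_{T ⊆ [m]} haf(Y_{T,T}) · haf(Z_{T^c,T^c})` for symmetric matrices. -/
theorem haf_add {m : ℕ} (Y Z : Matrix (Fin m) (Fin m) ℝ)
    (hY : Y.IsSymm) (hZ : Z.IsSymm) :
    haf (Y + Z) = ∑ T : Finset (Fin m), haf (subm Y T) * haf (subm Z Tᶜ) := by
  by_cases hm : 2 ∣ m
  · rw [lhs_eq hm Y Z, rhs_eq hm Y Z]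
    refine Finset.sum_congr rfl fun k hk => ?_
    have hk' : k ≤ m/2 := by simpa [Nat.lt_succ_iff] using hk
    rw [coeff_eq hk']
  · rw [haf_odd hm]
    symm
    refine Finset.sum_eq_zero fun T _ => ?_
    have hle : T.card ≤ m := by
      simpa using Finset.card_le_card (Finset.subset_univ T)
    by_cases h1 : 2 ∣ T.card
    · have h2 : ¬ 2 ∣ Tᶜ.card := by
        rw [Finset.card_compl]
        simp only [Fintype.card_fin]
        omega
      rw [haf_odd h2, mul_zero]
    · rw [haf_odd h1, zero_mul]
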